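/- For every natural number n ≥ 1, the roots of the Fibonacci product polynomial P_n are exactly the n distinct real numbers x_l = 4·cos²(πl/(2n+1)) + 1 for l = 1, 2, ..., n. -/

import Mathlib

open Polynomial

/-- Fibonacci product polynomials `P` (over `ℝ`). -/
noncomputable def fibP : ℕ → Polynomial ℝ
  | 0 => 1
  | 1 => X - 2
  | n + 2 => (X - 3) * fibP (n + 1) - fibP n

lemma fibP_monic_deg : ∀ n : ℕ, (fibP n).Monic ∧ (fibP n).natDegree = n
  | 0 => by simp [fibP, monic_one]
  | 1 => by
      have h2 : (2 : Polynomial ℝ) = C 2 := (map_ofNat C 2).symm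
      constructor
      · show (X - 2 : Polynomial ℝ).Monic
        rw [h2]; exact monic_X_sub_C 2
      · show (X - 2 : Polynomial ℝ).natDegree = 1
        rw [h2, natDegree_X_sub_C]
  | n + 2 => by
      obtain ⟨hm1, hd1⟩ := fibP_monic_deg (n + 1)
      obtain ⟨hm0, hd0⟩ := fibP_monic_deg n
      have hmul : ((X - C (3:ℝ)) * fibP (n + 1)).Monic :=
        (monic_X_sub_C (3:ℝ)).mul hm1
      have hdmul : ((X - C (3:ℝ)) * fibP (n + 1)).natDegree = n + 2 := by
        rw [natDegree_mul (monic_X_sub_C (3:ℝ)).ne_zero hm1.ne_zero,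
          natDegree_X_sub_C, hd1]
        ring
      have hlt : (fibP n).degree < ((X - C (3:ℝ)) * fibP (n + 1)).degree := by
        rw [degree_eq_natDegree hmul.ne_zero, hdmul]
        calc (fibP n).degree ≤ (fibP n).natDegree := degree_le_natDegree
          _ < ((n + 2 : ℕ) : WithBot ℕ) := by
              rw [hd0]; exact_mod_cast Nat.lt_add_of_pos_right (by norm_num)
      have h3 : (3 : Polynomial ℝ) = C (3:ℝ) := (map_ofNat C 3).symm
      constructor
      · show ((X - 3) * fibP (n + 1) - fibP n).Monic
        rw [h3]
        exact hmul.sub_of_left hlt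
      · show ((X - 3) * fibP (n + 1) - fibP n).natDegree = n + 2
        rw [h3]
        have := degree_sub_eq_left_of_degree_lt hlt
        have h := natDegree_eq_natDegree this
        rw [h, hdmul]

lemma two_cos_sin (a b : ℝ) :
    2 * Real.cos a * Real.sin b = Real.sin (b + a) + Real.sin (b - a) := by
  rw [Real.sin_add, Real.sin_sub]; ring

lemma fibP_eval : ∀ (n : ℕ) (θ : ℝ),
    (fibP n).eval (2 * Real.cos (2 * θ) + 3) * Real.sin θ
      = Real.sin ((2 * n + 1) * θ)
  | 0, θ => by simp [fibP]
  | 1, θ => by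
      have h := two_cos_sin (2 * θ) θ
      have e1 : θ + 2 * θ = 3 * θ := by ring
      have e2 : θ - 2 * θ = -θ := by ring
      rw [e1, e2, Real.sin_neg] at h
      simp only [fibP, eval_sub, eval_X, eval_ofNat]
      push_cast
      norm_num
      linear_combination h
  | n + 2, θ => by
      have h1 := fibP_eval (n + 1) θ
      have h0 := fibP_eval n θ
      have h := two_cos_sin (2 * θ) ((2 * ((n:ℝ) + 1) + 1) * θ)
      have e1 : (2 * ((n:ℝ) + 1) + 1) * θ + 2 * θ = (2 * ((n:ℝ) + 2) + 1) * θ := by ring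
      have e2 : (2 * ((n:ℝ) + 1) + 1) * θ - 2 * θ = (2 * (n:ℝ) + 1) * θ := by ring
      rw [e1, e2] at h
      simp only [fibP, eval_sub, eval_mul, eval_X, eval_ofNat]
      push_cast at h1 h0 ⊢
      linear_combination 2 * Real.cos (2 * θ) * h1 - h0 + h

theorem stmt9 (n : ℕ) (hn : 1 ≤ n) :
    (∀ x : ℝ, (fibP n).IsRoot x ↔
      ∃ l ∈ Finset.Icc 1 n,
        x = 4 * Real.cos (Real.pi * l / (2 * n + 1)) ^ 2 + 1) ∧
    Set.InjOn (fun l : ℕ => 4 * Real.cos (Real.pi * l / (2 * n + 1)) ^ 2 + 1)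
      (Finset.Icc 1 n) := by
  have hDpos : (0:ℝ) < 2 * n + 1 := by positivity
  have key : ∀ l : ℕ, 4 * Real.cos (Real.pi * l / (2 * n + 1)) ^ 2 + 1
      = 2 * Real.cos (2 * (Real.pi * l / (2 * n + 1))) + 3 := by
    intro l
    have := Real.cos_sq (Real.pi * l / (2 * n + 1))
    nlinarith [this]
  have hmem : ∀ l : ℕ, 1 ≤ l → l ≤ n →
      2 * (Real.pi * l / (2 * n + 1)) ∈ Set.Icc 0 Real.pi := by
    intro l h1 h2
    have hl1 : (1:ℝ) ≤ l := by exact_mod_cast h1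
    have hl2 : (l:ℝ) ≤ n := by exact_mod_cast h2
    constructor
    · positivity
    · have e : 2 * (Real.pi * l / (2 * n + 1)) = (2 * Real.pi * l) / (2 * n + 1) := by
        ring
      rw [e, div_le_iff₀ hDpos]
      nlinarith [Real.pi_pos]
  have hroot : ∀ l ∈ Finset.Icc 1 n,
      (fibP n).IsRoot (4 * Real.cos (Real.pi * l / (2 * n + 1)) ^ 2 + 1) := by
    intro l hl
    rw [Finset.mem_Icc] at hl
    set θ : ℝ := Real.pi * l / (2 * n + 1) with hθ
    have hl1 : (1:ℝ) ≤ l := by exact_mod_cast hl.1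
    have hl2 : (l:ℝ) ≤ n := by exact_mod_cast hl.2
    have hθpos : 0 < θ := by rw [hθ]; positivity
    have hθlt : θ < Real.pi := by
      rw [hθ, div_lt_iff₀ hDpos]
      nlinarith [Real.pi_pos]
    have hsin : Real.sin θ ≠ 0 :=
      ne_of_gt (Real.sin_pos_of_pos_of_lt_pi hθpos hθlt)
    have heval := fibP_eval n θ
    have harg : (2 * (n:ℝ) + 1) * θ = l * Real.pi := by
      rw [hθ]; field_simp
    rw [harg, Real.sin_nat_mul_pi] at heval
    have h0 : (fibP n).eval (2 * Real.cos (2 * θ) + 3) = 0 :=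
      (mul_eq_zero.mp heval).resolve_right hsin
    show (fibP n).eval _ = 0
    rw [key l]
    exact h0
  have hinj : Set.InjOn (fun l : ℕ => 4 * Real.cos (Real.pi * l / (2 * n + 1)) ^ 2 + 1)
      (Finset.Icc 1 n) := by
    intro a ha b hb hab
    simp only [Finset.coe_Icc, Set.mem_Icc] at ha hb
    simp only at hab
    rw [key a, key b] at hab
    have hcos : Real.cos (2 * (Real.pi * a / (2 * n + 1)))
        = Real.cos (2 * (Real.pi * b / (2 * n + 1))) := by linarith
    have := Real.injOn_cos (hmem a ha.1 ha.2) (hmem b hb.1 hb.2) hcos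
    have hpi := Real.pi_ne_zero
    field_simp at this
    exact_mod_cast (by linarith : (a:ℝ) = b)
  have hm := fibP_monic_deg n
  have hp0 : fibP n ≠ 0 := hm.1.ne_zero
  set f := fun l : ℕ => 4 * Real.cos (Real.pi * l / (2 * n + 1)) ^ 2 + 1 with hf
  have hsub : (Finset.Icc 1 n).image f ⊆ (fibP n).roots.toFinset := by
    intro x hx
    rw [Multiset.mem_toFinset, mem_roots hp0]
    obtain ⟨l, hl, rfl⟩ := Finset.mem_image.mp hx
    exact hroot l hl
  have hcard : ((Finset.Icc 1 n).image f).card = n := by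
    rw [Finset.card_image_of_injOn hinj, Nat.card_Icc]
    omega
  have hle : (fibP n).roots.toFinset.card ≤ n :=
    le_trans (Multiset.toFinset_card_le _)
      (le_trans ((fibP n).card_roots') (le_of_eq hm.2))
  have heq : (Finset.Icc 1 n).image f = (fibP n).roots.toFinset :=
    Finset.eq_of_subset_of_card_le hsub (by rw [hcard]; exact hle)
  refine ⟨fun x => ⟨fun hx => ?_, ?_⟩, hinj⟩
  · have hx' : x ∈ (Finset.Icc 1 n).image f := by
      rw [heq, Multiset.mem_toFinset, mem_roots hp0]
      exact hx
    obtain ⟨l, hl, hfl⟩ := Finset.mem_image.mp hx'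
    exact ⟨l, hl, hfl.symm⟩
  · rintro ⟨l, hl, rfl⟩
    exact hroot l hl
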